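/- arXiv:2305.15538 — 3 statements merged into one kernel-verified Lean document; each statement's English description precedes it below -/
import Mathlib

section
/- Let λ* ∈ ℝ^K be a global minimizer over ℝ^K of the dual objective λ ↦ f(λ) + γ‖λ‖₁ (where ‖λ‖₁ = Σ_k |λ_k|). Then the tilted pmf P_{λ*} is feasible, and it is the unique minimizer of D(P‖P_syn) over all feasible pmfs P on X; i.e., for every feasible pmf P, D(P‖P_syn) ≥ D(P_{λ*}‖P_syn), with equality if and only if P = P_{λ*}. -/
open Finset

noncomputable section

/-- `P` is a probability mass function on the finite set `X`. -/
def IsPMF {X : Type*} [Fintype X] (P : X → ℝ) : Prop :=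
  (∀ x, 0 ≤ P x) ∧ ∑ x, P x = 1

/-- The value of query `q` under a pmf `P`. -/
def queryVal {X : Type*} [Fintype X] (P : X → ℝ) (q : X → ℝ) : ℝ :=
  ∑ x, P x * q x

/-- `P` is feasible: all query answers are within `γ` of the targets `a`. -/
def Feasible {X : Type*} [Fintype X] {K : ℕ} (q : Fin K → X → ℝ) (a : Fin K → ℝ)
    (γ : ℝ) (P : X → ℝ) : Prop :=
  ∀ k : Fin K, |queryVal P (q k) - a k| ≤ γ

/-- KL divergence between pmfs on a finite set (with the convention `0 log 0 = 0`,
which holds automatically since `Real.log 0 = 0`). -/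
def KLdiv {X : Type*} [Fintype X] (P Q : X → ℝ) : ℝ :=
  ∑ x, P x * Real.log (P x / Q x)

/-- The log-partition part of the dual objective. -/
def dualF {X : Type*} [Fintype X] {K : ℕ} (Psyn : X → ℝ) (q : Fin K → X → ℝ)
    (a : Fin K → ℝ) (lam : Fin K → ℝ) : ℝ :=
  Real.log (∑ x, Psyn x * Real.exp (-∑ k, lam k * (q k x - a k)))

/-- The partition function of the tilted distribution. -/
def Zfun {X : Type*} [Fintype X] {K : ℕ} (Psyn : X → ℝ) (q : Fin K → X → ℝ)
    (a : Fin K → ℝ) (lam : Fin K → ℝ) : ℝ :=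
  ∑ x, Psyn x * Real.exp (-∑ k, lam k * (q k x - a k))

/-- The exponentially tilted pmf `P_λ`. -/
def tilt {X : Type*} [Fintype X] {K : ℕ} (Psyn : X → ℝ) (q : Fin K → X → ℝ)
    (a : Fin K → ℝ) (lam : Fin K → ℝ) (x : X) : ℝ :=
  Psyn x * Real.exp (-∑ k, lam k * (q k x - a k)) / Zfun Psyn q a lam

section Aux

variable {X : Type*} [Fintype X] [Nonempty X] {K : ℕ}
variable (Psyn : X → ℝ) (q : Fin K → X → ℝ) (a : Fin K → ℝ)

lemma Zfun_pos (hpos : ∀ x, 0 < Psyn x) (lam : Fin K → ℝ) :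
    0 < Zfun Psyn q a lam :=
  Finset.sum_pos (fun x _ => mul_pos (hpos x) (Real.exp_pos _)) univ_nonempty

lemma tilt_pos (hpos : ∀ x, 0 < Psyn x) (lam : Fin K → ℝ) (x : X) :
    0 < tilt Psyn q a lam x :=
  div_pos (mul_pos (hpos x) (Real.exp_pos _)) (Zfun_pos Psyn q a hpos lam)

lemma tilt_pmf (hpos : ∀ x, 0 < Psyn x) (lam : Fin K → ℝ) :
    IsPMF (tilt Psyn q a lam) := by
  refine ⟨fun x => (tilt_pos Psyn q a hpos lam x).le, ?_⟩
  unfold tilt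
  rw [← Finset.sum_div]
  exact div_self (Zfun_pos Psyn q a hpos lam).ne'

lemma gibbs {X : Type*} [Fintype X] {P Q : X → ℝ} (hP : IsPMF P) (hQ : IsPMF Q)
    (hQpos : ∀ x, 0 < Q x) :
    0 ≤ KLdiv P Q ∧ (KLdiv P Q = 0 → P = Q) := by
  set g : X → ℝ := fun x => Q x - P x + P x * Real.log (P x / Q x) with hg
  have hgnn : ∀ x, 0 ≤ g x := by
    intro x
    rcases eq_or_lt_of_le (hP.1 x) with h | h
    · simp [hg, ← h, (hQpos x).le]
    · have hq := hQpos x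
      have hlog : Real.log (Q x / P x) ≤ Q x / P x - 1 :=
        Real.log_le_sub_one_of_pos (div_pos hq h)
      have h1 : Real.log (P x / Q x) = - Real.log (Q x / P x) := by
        rw [Real.log_div h.ne' hq.ne', Real.log_div hq.ne' h.ne']; ring
      have h2 : P x * Real.log (Q x / P x) ≤ P x * (Q x / P x - 1) :=
        mul_le_mul_of_nonneg_left hlog h.le
      have h3 : P x * (Q x / P x - 1) = Q x - P x := by field_simp
      simp only [hg, h1]
      nlinarith
  have hgstrict : ∀ x, P x ≠ Q x → 0 < g x := by
    intro x hne
    rcases eq_or_lt_of_le (hP.1 x) with h | h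
    · have : 0 < Q x := hQpos x
      simp [hg, ← h]
      linarith [this, (Ne.symm hne : Q x ≠ P x)]
    · have hq := hQpos x
      have hne1 : Q x / P x ≠ 1 := by
        exact fun hc => hne ((div_eq_one_iff_eq h.ne').1 hc).symm
      have hlog : Real.log (Q x / P x) < Q x / P x - 1 :=
        Real.log_lt_sub_one_of_pos (div_pos hq h) hne1
      have h1 : Real.log (P x / Q x) = - Real.log (Q x / P x) := by
        rw [Real.log_div h.ne' hq.ne', Real.log_div hq.ne' h.ne']; ring
      have h2 : P x * Real.log (Q x / P x) < P x * (Q x / P x - 1) :=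
        (mul_lt_mul_of_pos_left hlog h)
      have h3 : P x * (Q x / P x - 1) = Q x - P x := by field_simp
      simp only [hg, h1]
      nlinarith
  have hsum : KLdiv P Q = ∑ x, g x := by
    simp only [hg, KLdiv]
    rw [Finset.sum_add_distrib, Finset.sum_sub_distrib, hP.2, hQ.2]
    ring
  constructor
  · rw [hsum]; exact Finset.sum_nonneg fun x _ => hgnn x
  · intro h0
    funext x
    by_contra hne
    have : 0 < ∑ x, g x :=
      Finset.sum_pos' (fun y _ => hgnn y) ⟨x, Finset.mem_univ x, hgstrict x hne⟩
    rw [hsum] at h0; linarith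

end Aux

section Aux2
variable {X : Type*} [Fintype X] [Nonempty X] {K : ℕ}
variable (Psyn : X → ℝ) (q : Fin K → X → ℝ) (a : Fin K → ℝ)

lemma queryVal_sub {P : X → ℝ} (hP : IsPMF P) (k : Fin K) :
    ∑ x, P x * (q k x - a k) = queryVal P (q k) - a k := by
  simp only [mul_sub, Finset.sum_sub_distrib, ← Finset.sum_mul, hP.2, queryVal, one_mul]

lemma KL_identity (hpos : ∀ x, 0 < Psyn x) (lam : Fin K → ℝ)
    {P : X → ℝ} (hP : IsPMF P) :
    KLdiv P Psyn = KLdiv P (tilt Psyn q a lam) - dualF Psyn q a lam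
      - ∑ k, lam k * (queryVal P (q k) - a k) := by
  have hZ : 0 < Zfun Psyn q a lam := Zfun_pos Psyn q a hpos lam
  set E : X → ℝ := fun x => -∑ k, lam k * (q k x - a k) with hE
  have key : ∀ x, P x * Real.log (P x / Psyn x)
      = P x * Real.log (P x / tilt Psyn q a lam x) + P x * E x
        - P x * Real.log (Zfun Psyn q a lam) := by
    intro x
    rcases eq_or_lt_of_le (hP.1 x) with h | h
    · simp [← h]
    · have hp := hpos x
      have ht : 0 < tilt Psyn q a lam x := tilt_pos Psyn q a hpos lam x
      have htilt : tilt Psyn q a lam x = Psyn x * Real.exp (E x) / Zfun Psyn q a lam := rfl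
      have l1 : Real.log (P x / Psyn x) = Real.log (P x) - Real.log (Psyn x) :=
        Real.log_div h.ne' hp.ne'
      have l2 : Real.log (P x / tilt Psyn q a lam x)
          = Real.log (P x) - Real.log (tilt Psyn q a lam x) :=
        Real.log_div h.ne' ht.ne'
      have l3 : Real.log (tilt Psyn q a lam x)
          = Real.log (Psyn x) + E x - Real.log (Zfun Psyn q a lam) := by
        rw [htilt, Real.log_div (by positivity) hZ.ne', Real.log_mul hp.ne' (Real.exp_pos _).ne',
          Real.log_exp]
      rw [l1, l2, l3]; ring
  have hsum1 : ∑ x, P x * E x = -∑ k, lam k * (queryVal P (q k) - a k) := by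
    calc ∑ x, P x * E x = ∑ x, ∑ k, -(lam k * (P x * (q k x - a k))) := by
          refine Finset.sum_congr rfl fun x _ => ?_
          rw [hE, mul_neg, Finset.mul_sum, ← Finset.sum_neg_distrib]
          exact Finset.sum_congr rfl fun k _ => by ring
      _ = ∑ k, ∑ x, -(lam k * (P x * (q k x - a k))) := Finset.sum_comm
      _ = -∑ k, lam k * (queryVal P (q k) - a k) := by
          rw [← Finset.sum_neg_distrib]
          refine Finset.sum_congr rfl fun k _ => ?_
          rw [← queryVal_sub q a hP k, Finset.mul_sum, ← Finset.sum_neg_distrib]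
  have hsum2 : ∑ x, P x * Real.log (Zfun Psyn q a lam) = dualF Psyn q a lam := by
    rw [← Finset.sum_mul, hP.2, one_mul]; rfl
  calc KLdiv P Psyn = ∑ x, (P x * Real.log (P x / tilt Psyn q a lam x) + P x * E x
        - P x * Real.log (Zfun Psyn q a lam)) := Finset.sum_congr rfl fun x _ => key x
    _ = (∑ x, P x * Real.log (P x / tilt Psyn q a lam x)) + (∑ x, P x * E x)
        - ∑ x, P x * Real.log (Zfun Psyn q a lam) := by
          rw [Finset.sum_sub_distrib, Finset.sum_add_distrib]
    _ = _ := by rw [hsum1, hsum2]; unfold KLdiv; ring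

end Aux2

section Aux3
variable {X : Type*} [Fintype X] [Nonempty X] {K : ℕ}
variable (Psyn : X → ℝ) (q : Fin K → X → ℝ) (a : Fin K → ℝ)

lemma dualF_deriv (hpos : ∀ x, 0 < Psyn x) (lam : Fin K → ℝ) (k : Fin K) :
    HasDerivAt (fun t : ℝ => dualF Psyn q a (fun j => lam j + if j = k then t else 0))
      (a k - queryVal (tilt Psyn q a lam) (q k)) 0 := by
  have hZ : 0 < Zfun Psyn q a lam := Zfun_pos Psyn q a hpos lam
  set S : X → ℝ := fun x => ∑ j, lam j * (q j x - a j) with hS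
  set d : X → ℝ := fun x => q k x - a k with hd
  have hfun : (fun t : ℝ => dualF Psyn q a (fun j => lam j + if j = k then t else 0))
      = fun t : ℝ => Real.log (∑ x, Psyn x * Real.exp (-(S x + t * d x))) := by
    funext t
    unfold dualF
    congr 1
    refine Finset.sum_congr rfl fun x _ => ?_
    congr 2
    rw [hS, hd, show (∑ j, (lam j + if j = k then t else 0) * (q j x - a j))
        = (∑ j, lam j * (q j x - a j)) + ∑ j, (if j = k then t else 0) * (q j x - a j) by
      rw [← Finset.sum_add_distrib]; exact Finset.sum_congr rfl fun j _ => by ring]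
    congr 1
    simp [ite_mul, Finset.sum_ite_eq']
  rw [hfun]
  -- derivative of the inner sum
  have hsum : HasDerivAt (fun t : ℝ => ∑ x, Psyn x * Real.exp (-(S x + t * d x)))
      (∑ x, -(d x) * (Psyn x * Real.exp (-(S x)))) 0 := by
    have h0 : ∀ x : X, HasDerivAt (fun t : ℝ => Psyn x * Real.exp (-(S x + t * d x)))
        (-(d x) * (Psyn x * Real.exp (-(S x)))) 0 := by
      intro x
      have h1 : HasDerivAt (fun t : ℝ => -(S x + t * d x)) (-(d x)) 0 := by
        have := ((hasDerivAt_id (0:ℝ)).mul_const (d x)).const_add (S x)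
        have h := this.neg
        simp only [id, one_mul] at h
        exact h
      have h2 := (h1.exp).const_mul (Psyn x)
      simpa [mul_comm, mul_left_comm, mul_assoc] using h2
    have := HasDerivAt.fun_sum (fun x (_ : x ∈ Finset.univ) => h0 x)
    simpa using this
  have hZ0 : (∑ x, Psyn x * Real.exp (-(S x + (0:ℝ) * d x))) = Zfun Psyn q a lam := by
    refine Finset.sum_congr rfl fun x _ => ?_
    simp [hS]
  have hlog := hsum.log (by rw [hZ0]; exact hZ.ne')
  have hval : (∑ x, -(d x) * (Psyn x * Real.exp (-(S x))))
        / (∑ x, Psyn x * Real.exp (-(S x + (0:ℝ) * d x)))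
      = a k - queryVal (tilt Psyn q a lam) (q k) := by
    rw [hZ0]
    have htilt : ∀ x, tilt Psyn q a lam x = Psyn x * Real.exp (-(S x)) / Zfun Psyn q a lam := by
      intro x; rfl
    have hone : ∑ x, tilt Psyn q a lam x = 1 := (tilt_pmf Psyn q a hpos lam).2
    rw [Finset.sum_div]
    calc ∑ x, -(d x) * (Psyn x * Real.exp (-(S x))) / Zfun Psyn q a lam
        = ∑ x, tilt Psyn q a lam x * (a k - q k x) := by
          refine Finset.sum_congr rfl fun x _ => ?_
          rw [htilt x, hd]; field_simp; ring
      _ = a k * ∑ x, tilt Psyn q a lam x - ∑ x, tilt Psyn q a lam x * q k x := by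
          rw [Finset.mul_sum, ← Finset.sum_sub_distrib]
          exact Finset.sum_congr rfl fun x _ => by ring
      _ = a k - queryVal (tilt Psyn q a lam) (q k) := by rw [hone, mul_one]; rfl
  rw [hval] at hlog
  exact hlog

lemma slope_right {F : ℝ → ℝ} {L c : ℝ} (hF : HasDerivAt F L 0)
    (h : ∀ᶠ t in nhdsWithin (0:ℝ) (Set.Ioi 0), c ≤ (F t - F 0) / t) : c ≤ L := by
  have h1 : Filter.Tendsto (slope F 0) (nhdsWithin 0 {(0:ℝ)}ᶜ) (nhds L) :=
    hasDerivAt_iff_tendsto_slope.mp hF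
  have h2 : Filter.Tendsto (slope F 0) (nhdsWithin (0:ℝ) (Set.Ioi 0)) (nhds L) :=
    h1.mono_left (nhdsWithin_mono _ (fun x hx => ne_of_gt hx))
  refine ge_of_tendsto h2 ?_
  filter_upwards [h] with t ht
  simpa [slope_def_field] using ht

lemma slope_left {F : ℝ → ℝ} {L c : ℝ} (hF : HasDerivAt F L 0)
    (h : ∀ᶠ t in nhdsWithin (0:ℝ) (Set.Iio 0), (F t - F 0) / t ≤ c) : L ≤ c := by
  have h1 : Filter.Tendsto (slope F 0) (nhdsWithin 0 {(0:ℝ)}ᶜ) (nhds L) :=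
    hasDerivAt_iff_tendsto_slope.mp hF
  have h2 : Filter.Tendsto (slope F 0) (nhdsWithin (0:ℝ) (Set.Iio 0)) (nhds L) :=
    h1.mono_left (nhdsWithin_mono _ (fun x hx => ne_of_lt hx))
  refine le_of_tendsto h2 ?_
  filter_upwards [h] with t ht
  simpa [slope_def_field] using ht

end Aux3


/-- If `λ*` globally minimizes the dual objective `λ ↦ f(λ) + γ‖λ‖₁`, then the tilted pmf
`P_{λ*}` is feasible and is the unique minimizer of `D(P‖P_syn)` over feasible pmfs. -/
theorem optimality_of_dual_minimizer
    {X : Type*} [Fintype X] [Nonempty X] {K : ℕ}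
    (Psyn : X → ℝ) (hPsyn : IsPMF Psyn) (hpos : ∀ x, 0 < Psyn x)
    (q : Fin K → X → ℝ) (a : Fin K → ℝ) (γ : ℝ) (hγ : 0 ≤ γ)
    (lamStar : Fin K → ℝ)
    (hmin : ∀ lam : Fin K → ℝ,
      dualF Psyn q a lamStar + γ * ∑ k, |lamStar k| ≤
        dualF Psyn q a lam + γ * ∑ k, |lam k|) :
    Feasible q a γ (tilt Psyn q a lamStar) ∧
      ∀ P : X → ℝ, IsPMF P → Feasible q a γ P →
        KLdiv (tilt Psyn q a lamStar) Psyn ≤ KLdiv P Psyn ∧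
          (KLdiv P Psyn = KLdiv (tilt Psyn q a lamStar) Psyn ↔
            P = tilt Psyn q a lamStar) := by
  set Pst := tilt Psyn q a lamStar with hPstdef
  have hPstpmf : IsPMF Pst := tilt_pmf Psyn q a hpos lamStar
  have hPstpos : ∀ x, 0 < Pst x := tilt_pos Psyn q a hpos lamStar
  have claim : ∀ k : Fin K, |queryVal Pst (q k) - a k| ≤ γ ∧
      lamStar k * (queryVal Pst (q k) - a k) = γ * |lamStar k| := by
    intro k
    set F : ℝ → ℝ := fun t => dualF Psyn q a (fun j => lamStar j + if j = k then t else 0)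
      with hFdef
    have hder : HasDerivAt F (a k - queryVal Pst (q k)) 0 := dualF_deriv Psyn q a hpos lamStar k
    set L := a k - queryVal Pst (q k) with hLdef
    have hF0 : F 0 = dualF Psyn q a lamStar := by
      simp only [hFdef]
      congr 1
      funext j
      simp
    have hbound : ∀ t : ℝ, γ * |lamStar k| - γ * |lamStar k + t| ≤ F t - F 0 := by
      intro t
      have h1 := hmin (fun j => lamStar j + if j = k then t else 0)
      have h2 : (∑ j, |lamStar j + if j = k then t else 0|) - ∑ j, |lamStar j|
          = |lamStar k + t| - |lamStar k| := by
        rw [← Finset.sum_sub_distrib]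
        have hterm : ∀ j : Fin K, |lamStar j + if j = k then t else 0| - |lamStar j|
            = if j = k then |lamStar k + t| - |lamStar k| else 0 := by
          intro j; by_cases hj : j = k <;> simp [hj]
        rw [Finset.sum_congr rfl fun j _ => hterm j]
        simp [Finset.sum_ite_eq']
      have h3 : γ * ∑ j, |lamStar j + if j = k then t else 0|
          = γ * (∑ j, |lamStar j|) + γ * (|lamStar k + t| - |lamStar k|) := by
        rw [← mul_add]
        congr 1
        linarith [h2]
      rw [hF0]
      have h4 : dualF Psyn q a lamStar + γ * ∑ j, |lamStar j| ≤
          F t + γ * ∑ j, |lamStar j + if j = k then t else 0| := h1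
      rw [h3] at h4
      have h5 : γ * (|lamStar k + t| - |lamStar k|) = γ * |lamStar k + t| - γ * |lamStar k| := by
        ring
      linarith
    have hA1 : -γ ≤ L := by
      apply slope_right hder
      filter_upwards [self_mem_nhdsWithin] with t ht
      have ht' : (0:ℝ) < t := ht
      have habs : |lamStar k + t| ≤ |lamStar k| + t := by
        calc |lamStar k + t| ≤ |lamStar k| + |t| := abs_add_le _ _
          _ = |lamStar k| + t := by rw [abs_of_pos ht']
      have h3 : -γ * t ≤ F t - F 0 := by nlinarith [hbound t]
      rw [le_div_iff₀ ht']
      linarith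
    have hA2 : L ≤ γ := by
      apply slope_left hder
      filter_upwards [self_mem_nhdsWithin] with t ht
      have ht' : t < (0:ℝ) := ht
      have habs : |lamStar k + t| ≤ |lamStar k| - t := by
        calc |lamStar k + t| ≤ |lamStar k| + |t| := abs_add_le _ _
          _ = |lamStar k| - t := by rw [abs_of_neg ht']; ring
      have h3 : γ * t ≤ F t - F 0 := by nlinarith [hbound t]
      rw [div_le_iff_of_neg ht']
      linarith
    have hfeas : |queryVal Pst (q k) - a k| ≤ γ := by
      rw [abs_sub_comm, ← hLdef]
      exact abs_le.2 ⟨hA1, hA2⟩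
    refine ⟨hfeas, ?_⟩
    rcases lt_trichotomy (lamStar k) 0 with hlt | heq | hgt
    · have hLγ : γ ≤ L := by
        apply slope_right hder
        have hev : ∀ᶠ t in nhdsWithin (0:ℝ) (Set.Ioi 0), t < -lamStar k :=
          (eventually_lt_nhds (by linarith : (0:ℝ) < -lamStar k)).filter_mono
            nhdsWithin_le_nhds
        filter_upwards [self_mem_nhdsWithin, hev] with t ht htlt
        have ht' : (0:ℝ) < t := ht
        have habs : |lamStar k + t| = |lamStar k| - t := by
          rw [abs_of_neg hlt, abs_of_neg (by linarith : lamStar k + t < 0)]; ring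
        have h3 := hbound t
        rw [habs] at h3
        rw [le_div_iff₀ ht']
        linarith
      have hLeq : L = γ := le_antisymm hA2 hLγ
      have : queryVal Pst (q k) - a k = -γ := by linarith [hLeq]
      rw [this, abs_of_neg hlt]
      ring
    · simp [heq]
    · have hLγ : L ≤ -γ := by
        apply slope_left hder
        have hev : ∀ᶠ t in nhdsWithin (0:ℝ) (Set.Iio 0), -lamStar k < t :=
          (eventually_gt_nhds (by linarith : -lamStar k < 0)).filter_mono
            nhdsWithin_le_nhds
        filter_upwards [self_mem_nhdsWithin, hev] with t ht htgt
        have ht' : t < (0:ℝ) := ht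
        have habs : |lamStar k + t| = |lamStar k| + t := by
          rw [abs_of_pos hgt, abs_of_pos (by linarith : 0 < lamStar k + t)]
        have h3 := hbound t
        rw [habs] at h3
        rw [div_le_iff_of_neg ht']
        linarith
      have hLeq : L = -γ := le_antisymm hLγ hA1
      have : queryVal Pst (q k) - a k = γ := by
        have := hLdef
        linarith [hLeq]
      rw [this, abs_of_pos hgt]
      ring
  have hfeas : Feasible q a γ Pst := fun k => (claim k).1
  have hKLPst : KLdiv Pst Psyn = - dualF Psyn q a lamStar - γ * ∑ j, |lamStar j| := by
    have hid := KL_identity Psyn q a hpos lamStar hPstpmf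
    rw [← hPstdef] at hid
    have hself : KLdiv Pst Pst = 0 := by
      unfold KLdiv
      refine Finset.sum_eq_zero fun x _ => ?_
      rw [div_self (hPstpos x).ne', Real.log_one, mul_zero]
    have hcs : ∑ j, lamStar j * (queryVal Pst (q j) - a j) = γ * ∑ j, |lamStar j| := by
      rw [Finset.mul_sum]
      exact Finset.sum_congr rfl fun j _ => (claim j).2
    rw [hid, hself, hcs]
    ring
  refine ⟨hfeas, ?_⟩
  intro P hP hPfeas
  have hid := KL_identity Psyn q a hpos lamStar hP
  rw [← hPstdef] at hid
  have hgb := gibbs hP hPstpmf hPstpos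
  have hsumle : ∑ j, lamStar j * (queryVal P (q j) - a j) ≤ γ * ∑ j, |lamStar j| := by
    rw [Finset.mul_sum]
    refine Finset.sum_le_sum fun j _ => ?_
    calc lamStar j * (queryVal P (q j) - a j)
        ≤ |lamStar j * (queryVal P (q j) - a j)| := le_abs_self _
      _ = |lamStar j| * |queryVal P (q j) - a j| := abs_mul _ _
      _ ≤ |lamStar j| * γ := mul_le_mul_of_nonneg_left (hPfeas j) (abs_nonneg _)
      _ = γ * |lamStar j| := mul_comm _ _
  have hmain : KLdiv Pst Psyn ≤ KLdiv P Psyn := by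
    rw [hid, hKLPst]
    linarith [hgb.1]
  refine ⟨hmain, ?_, fun heq => by rw [heq]⟩
  intro heq
  apply hgb.2
  have h1 : KLdiv P Pst = KLdiv P Psyn + dualF Psyn q a lamStar
      + ∑ j, lamStar j * (queryVal P (q j) - a j) := by linarith [hid]
  have h2 : KLdiv P Pst ≤ 0 := by
    rw [h1, heq, hKLPst]
    linarith
  linarith [hgb.1, h2]
end
end

section
/- Weak duality for the information-projection problem: for every feasible pmf P on X and every λ ∈ ℝ^K, D(P‖P_syn) ≥ −f(λ) − γ‖λ‖₁, where ‖λ‖₁ = Σ_k |λ_k|. -/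
open Finset

noncomputable section

/-- Gibbs-type inequality: `∑ P log(g/P) ≤ log ∑ g` for a pmf `P` and positive `g`. -/
lemma gibbs_aux {X : Type*} [Fintype X] [Nonempty X] (P g : X → ℝ)
    (hP : ∀ x, 0 ≤ P x) (hP1 : ∑ x, P x = 1) (hg : ∀ x, 0 < g x) :
    ∑ x, P x * Real.log (g x / P x) ≤ Real.log (∑ x, g x) := by
  set Z : ℝ := ∑ x, g x with hZ
  have hZpos : 0 < Z := Finset.sum_pos (fun x _ => hg x) Finset.univ_nonempty
  have key : ∑ x, P x * Real.log (g x / (P x * Z)) ≤ 0 := by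
    have hterm : ∀ x : X, P x * Real.log (g x / (P x * Z)) ≤ g x / Z - P x := by
      intro x
      rcases eq_or_lt_of_le (hP x) with h0 | h0
      · simp [← h0]
        exact div_nonneg (hg x).le hZpos.le
      · have ht : 0 < g x / (P x * Z) := div_pos (hg x) (mul_pos h0 hZpos)
        have := Real.log_le_sub_one_of_pos ht
        have h2 : P x * Real.log (g x / (P x * Z)) ≤ P x * (g x / (P x * Z) - 1) :=
          mul_le_mul_of_nonneg_left this (hP x)
        calc P x * Real.log (g x / (P x * Z)) ≤ P x * (g x / (P x * Z) - 1) := h2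
          _ = g x / Z - P x := by field_simp
    calc ∑ x, P x * Real.log (g x / (P x * Z)) ≤ ∑ x, (g x / Z - P x) :=
          Finset.sum_le_sum fun x _ => hterm x
      _ = (∑ x, g x) / Z - ∑ x, P x := by rw [Finset.sum_sub_distrib, ← Finset.sum_div]
      _ = 0 := by rw [← hZ, hP1, div_self hZpos.ne']; ring
  have split : ∑ x, P x * Real.log (g x / P x)
      = (∑ x, P x * Real.log (g x / (P x * Z))) + Real.log Z := by
    have : ∀ x : X, P x * Real.log (g x / P x)
        = P x * Real.log (g x / (P x * Z)) + P x * Real.log Z := by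
      intro x
      rcases eq_or_lt_of_le (hP x) with h0 | h0
      · simp [← h0]
      · have h1 : g x / (P x * Z) = (g x / P x) / Z := by field_simp
        rw [h1, Real.log_div (div_pos (hg x) h0).ne' hZpos.ne']
        ring
    rw [Finset.sum_congr rfl fun x _ => this x, Finset.sum_add_distrib,
      ← Finset.sum_mul, hP1, one_mul]
  linarith

/-- Weak duality: for every feasible pmf `P` and every `λ`,
`D(P‖P_syn) ≥ −f(λ) − γ‖λ‖₁`. -/
theorem weak_duality
    {X : Type*} [Fintype X] [Nonempty X] {K : ℕ}
    (Psyn : X → ℝ) (hPsyn : IsPMF Psyn) (hpos : ∀ x, 0 < Psyn x)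
    (q : Fin K → X → ℝ) (a : Fin K → ℝ) (γ : ℝ) (hγ : 0 ≤ γ)
    (P : X → ℝ) (hP : IsPMF P) (hfeas : Feasible q a γ P)
    (lam : Fin K → ℝ) :
    KLdiv P Psyn ≥ -dualF Psyn q a lam - γ * ∑ k, |lam k| := by
  obtain ⟨hPnn, hP1⟩ := hP
  set s : X → ℝ := fun x => ∑ k, lam k * (q k x - a k) with hs
  set g : X → ℝ := fun x => Psyn x * Real.exp (-s x) with hgdef
  have hg : ∀ x, 0 < g x := fun x => mul_pos (hpos x) (Real.exp_pos _)
  have hgibbs := gibbs_aux P g hPnn hP1 hg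
  have hF : dualF Psyn q a lam = Real.log (∑ x, g x) := rfl
  -- rewrite LHS of gibbs
  have hLHS : ∑ x, P x * Real.log (g x / P x)
      = -KLdiv P Psyn - ∑ x, P x * s x := by
    rw [KLdiv, ← Finset.sum_neg_distrib, ← Finset.sum_sub_distrib]
    refine Finset.sum_congr rfl fun x _ => ?_
    rcases eq_or_lt_of_le (hPnn x) with h0 | h0
    · simp [← h0]
    · have h1 : g x / P x = (Psyn x / P x) * Real.exp (-s x) := by
        rw [hgdef]; ring
      rw [h1, Real.log_mul (div_pos (hpos x) h0).ne' (Real.exp_ne_zero _), Real.log_exp,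
        Real.log_div (hpos x).ne' h0.ne', Real.log_div h0.ne' (hpos x).ne']
      ring
  -- the linear term
  have hswap : ∑ x, P x * s x = ∑ k, lam k * (queryVal P (q k) - a k) := by
    rw [hs]
    simp only [Finset.mul_sum]
    rw [Finset.sum_comm]
    refine Finset.sum_congr rfl fun k _ => ?_
    have hqa : ∑ x, (P x * q k x - P x * a k) = queryVal P (q k) - a k := by
      rw [Finset.sum_sub_distrib, queryVal, ← Finset.sum_mul, hP1, one_mul]
    calc ∑ x, P x * (lam k * (q k x - a k))
        = lam k * ∑ x, (P x * q k x - P x * a k) := by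
          rw [Finset.mul_sum]; exact Finset.sum_congr rfl fun x _ => by ring
      _ = lam k * (queryVal P (q k) - a k) := by rw [hqa]
  have hbound : |∑ x, P x * s x| ≤ γ * ∑ k, |lam k| := by
    rw [hswap, Finset.mul_sum]
    calc |∑ k, lam k * (queryVal P (q k) - a k)|
        ≤ ∑ k, |lam k * (queryVal P (q k) - a k)| := Finset.abs_sum_le_sum_abs _ _
      _ ≤ ∑ k, γ * |lam k| := by
          refine Finset.sum_le_sum fun k _ => ?_
          rw [abs_mul, mul_comm]
          exact mul_le_mul_of_nonneg_right (hfeas k) (abs_nonneg _)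
  have h1 : ∑ x, P x * s x ≤ γ * ∑ k, |lam k| :=
    (le_abs_self _).trans hbound
  rw [hLHS] at hgibbs
  rw [ge_iff_le, hF]
  linarith
end
end

section
/- Privacy of the Laplace mechanism: let Δ > 0, ε > 0, and b = Δ/ε. For t ∈ ℝ let Lap(t, b) denote the measure on ℝ with density x ↦ (2b)⁻¹ exp(−|x − t| / b) with respect to Lebesgue measure. Then for all t, t' ∈ ℝ with |t − t'| ≤ Δ and every Borel set A ⊆ ℝ, Lap(t, b)(A) ≤ e^ε · Lap(t', b)(A). -/
open MeasureTheory

/-- The Laplace distribution on `ℝ` with location `t` and scale `b`, given by its density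
`x ↦ (2b)⁻¹ exp(−|x − t|/b)` with respect to Lebesgue measure. -/
noncomputable def Lap (t b : ℝ) : Measure ℝ :=
  volume.withDensity fun x => ENNReal.ofReal ((2 * b)⁻¹ * Real.exp (-|x - t| / b))

/-- Privacy of the Laplace mechanism: with scale `b = Δ/ε`, for any two locations within
`Δ` of each other, the Laplace measures satisfy the pure `ε`-DP likelihood-ratio bound. -/
theorem laplace_mechanism_privacy
    (Δ ε : ℝ) (hΔ : 0 < Δ) (hε : 0 < ε) (b : ℝ) (hb : b = Δ / ε)
    (t t' : ℝ) (ht : |t - t'| ≤ Δ)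
    (A : Set ℝ) (hA : MeasurableSet A) :
    Lap t b A ≤ ENNReal.ofReal (Real.exp ε) * Lap t' b A := by
  have hb0 : 0 < b := hb ▸ div_pos hΔ hε
  have key : ∀ x : ℝ, (2 * b)⁻¹ * Real.exp (-|x - t| / b)
      ≤ Real.exp ε * ((2 * b)⁻¹ * Real.exp (-|x - t'| / b)) := by
    intro x
    have h1 : |x - t| ≥ |x - t'| - Δ := by
      have h0 := abs_sub_abs_le_abs_sub (x - t') (x - t)
      have h2 : |(x - t') - (x - t)| = |t - t'| := by
        rw [show (x - t') - (x - t) = t - t' by ring]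
      linarith
    have hεb : ε * b = Δ := by
      rw [hb]; field_simp
    have : -|x - t| / b ≤ ε + -|x - t'| / b := by
      rw [div_le_iff₀ hb0, add_mul, div_mul_cancel₀ _ hb0.ne']
      linarith
    calc (2 * b)⁻¹ * Real.exp (-|x - t| / b)
        ≤ (2 * b)⁻¹ * Real.exp (ε + -|x - t'| / b) := by
          apply mul_le_mul_of_nonneg_left (Real.exp_le_exp.2 this)
          positivity
      _ = Real.exp ε * ((2 * b)⁻¹ * Real.exp (-|x - t'| / b)) := by
          rw [Real.exp_add]; ring
  have hmeas : Measurable fun x : ℝ =>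
      ENNReal.ofReal ((2 * b)⁻¹ * Real.exp (-|x - t'| / b)) := by
    apply Measurable.ennreal_ofReal
    apply Measurable.const_mul
    exact (Real.measurable_exp.comp ((measurable_id.sub_const t').abs.neg.div_const b))
  calc Lap t b A ≤ (volume.withDensity fun x =>
        ENNReal.ofReal (Real.exp ε) * ENNReal.ofReal ((2 * b)⁻¹ * Real.exp (-|x - t'| / b))) A := by
        refine Measure.le_iff'.mp (withDensity_mono (Filter.Eventually.of_forall fun x => ?_)) A
        calc ENNReal.ofReal ((2 * b)⁻¹ * Real.exp (-|x - t| / b))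
            ≤ ENNReal.ofReal (Real.exp ε * ((2 * b)⁻¹ * Real.exp (-|x - t'| / b))) :=
              ENNReal.ofReal_le_ofReal (key x)
          _ = _ := ENNReal.ofReal_mul (Real.exp_nonneg ε)
    _ = ENNReal.ofReal (Real.exp ε) * Lap t' b A := by
        have h : ENNReal.ofReal (Real.exp ε) * Lap t' b A
            = (ENNReal.ofReal (Real.exp ε) • Lap t' b) A := by
          rw [Measure.smul_apply, smul_eq_mul]
        rw [h, Lap, ← withDensity_smul _ hmeas]
        rfl
end
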